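/- Boundedness of value from stability: suppose V : C → ℝ represents preferences over consequences, and for each pair c' ≻ c there is ε > 0 such that for every consequence d, the mixture assigning weight 1−ε to c and ε to d has expected utility (1−ε)V(c) + εV(d) < V(c'). Then V is bounded above: there is no sequence cᵢ with V(cᵢ) → +∞. -/
import Mathlib


theorem stmt_19 {C : Type*} (V : C → ℝ) (succ : C → C → Prop)
    (hrep : ∀ c c' : C, V c > V c' ↔ succ c c')
    (hstab : ∀ c c' : C, succ c' c → ∃ ε : ℝ, 0 < ε ∧
      ∀ d : C, (1 - ε) * V c + ε * V d < V c') :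
    ¬ ∃ c : ℕ → C, Filter.Tendsto (fun i => V (c i)) Filter.atTop Filter.atTop := by
  rintro ⟨c, hc⟩
  obtain ⟨n, hn⟩ := (hc.eventually_ge_atTop (V (c 0) + 1)).exists
  have hsucc : succ (c n) (c 0) := (hrep _ _).mp (by linarith)
  obtain ⟨ε, hε, hlt⟩ := hstab (c 0) (c n) hsucc
  -- ε * V (c i) < V (c n) - (1-ε) * V (c 0) for all i, contradicting tendsto
  have hb : ∀ i, V (c i) < (V (c n) - (1 - ε) * V (c 0)) / ε := by
    intro i
    have := hlt (c i)
    rw [lt_div_iff₀ hε]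
    linarith
  obtain ⟨m, hm⟩ := (hc.eventually_ge_atTop ((V (c n) - (1 - ε) * V (c 0)) / ε)).exists
  exact absurd hm (not_le.mpr (hb m))
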